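/- arXiv:2505.02962 — 2 statements merged into one kernel-verified Lean document; each statement's English description precedes it below -/
import Mathlib

section
/- Let c₁,…,c₆ ∈ ℝ with Δ := c₁c₄ − c₂c₃ ≠ 0, let W⁰, W¹ : ℝ → ℝ be smooth, let Ω ⊆ {(z₁,z₂) ∈ ℝ² : c₃z₁ + c₄ ≠ 0} be open, and let w : Ω → ℝ be a smooth solution of the reduced equation. Define Φ(z₁,z₂) := ((c₁z₁+c₂)/(c₃z₁+c₄), (z₂+c₅z₁+c₆)/(c₃z₁+c₄)). Then Φ is injective on Ω, Φ(Ω) is open, and the function v : Φ(Ω) → ℝ determined by v(Φ(z₁,z₂)) = w(z₁,z₂)/(Δ(c₃z₁+c₄)) − c₃z₂³/(6Δ(c₃z₁+c₄)²) − (c₃c₆ − c₄c₅)z₂²/(2Δ(c₃z₁+c₄)²) + W¹(z₁)z₂ + W⁰(z₁) is a smooth solution of the reduced equation on Φ(Ω). (This is the verification part of the theorem describing the point-symmetry pseudogroup of the reduced equation.) -/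
set_option linter.all false


/-- First-coordinate partial derivative of a function on `ℝ²`. -/
noncomputable def d1 (f : ℝ × ℝ → ℝ) (p : ℝ × ℝ) : ℝ := deriv (fun s => f (s, p.2)) p.1

/-- Second-coordinate partial derivative of a function on `ℝ²`. -/
noncomputable def d2 (f : ℝ × ℝ → ℝ) (p : ℝ × ℝ) : ℝ := deriv (fun s => f (p.1, s)) p.2

/-- `w` is a smooth solution of the reduced equation `∂₁∂₂²w + (∂₂²w)·(∂₂³w) = 0` on `U`. -/
def IsRedSolOn (w : ℝ × ℝ → ℝ) (U : Set (ℝ × ℝ)) : Prop :=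
  ContDiffOn ℝ (⊤ : ℕ∞) w U ∧
    ∀ p ∈ U, d1 (d2 (d2 w)) p + d2 (d2 w) p * d2 (d2 (d2 w)) p = 0

/-- `h` is a smooth solution of the inviscid Burgers equation `∂₁h + h·∂₂h = 0` on `U`. -/
def IsBurgersSolOn (h : ℝ × ℝ → ℝ) (U : Set (ℝ × ℝ)) : Prop :=
  ContDiffOn ℝ (⊤ : ℕ∞) h U ∧ ∀ p ∈ U, d1 h p + h p * d2 h p = 0

section Aux

lemma fderiv_slice2 {f : ℝ×ℝ→ℝ} {p : ℝ×ℝ} (hfa : DifferentiableAt ℝ f p) :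
    HasDerivAt (fun s => f (p.1, s)) (fderiv ℝ f p (0,1)) p.2 := by
  have hcurve : HasDerivAt (fun s : ℝ => ((p.1 : ℝ), s)) ((0:ℝ),(1:ℝ)) p.2 :=
    HasDerivAt.prodMk (hasDerivAt_const _ _) (hasDerivAt_id _)
  exact (hfa.hasFDerivAt.comp_hasDerivAt p.2 hcurve)

lemma fderiv_slice1 {f : ℝ×ℝ→ℝ} {p : ℝ×ℝ} (hfa : DifferentiableAt ℝ f p) :
    HasDerivAt (fun s => f (s, p.2)) (fderiv ℝ f p (1,0)) p.1 := by
  have hcurve : HasDerivAt (fun s : ℝ => (s, (p.2 : ℝ))) ((1:ℝ),(0:ℝ)) p.1 :=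
    HasDerivAt.prodMk (hasDerivAt_id _) (hasDerivAt_const _ _)
  exact (hfa.hasFDerivAt.comp_hasDerivAt p.1 hcurve)

lemma d2_eq_fderiv {f : ℝ×ℝ→ℝ} {p : ℝ×ℝ} (hfa : DifferentiableAt ℝ f p) :
    d2 f p = fderiv ℝ f p (0,1) := (fderiv_slice2 hfa).deriv

lemma d1_eq_fderiv {f : ℝ×ℝ→ℝ} {p : ℝ×ℝ} (hfa : DifferentiableAt ℝ f p) :
    d1 f p = fderiv ℝ f p (1,0) := (fderiv_slice1 hfa).deriv

lemma hasDerivAt_slice2 {f : ℝ×ℝ→ℝ} {p : ℝ×ℝ} (hfa : DifferentiableAt ℝ f p) :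
    HasDerivAt (fun s => f (p.1, s)) (d2 f p) p.2 := by
  rw [d2_eq_fderiv hfa]; exact fderiv_slice2 hfa

lemma hasDerivAt_slice1 {f : ℝ×ℝ→ℝ} {p : ℝ×ℝ} (hfa : DifferentiableAt ℝ f p) :
    HasDerivAt (fun s => f (s, p.2)) (d1 f p) p.1 := by
  rw [d1_eq_fderiv hfa]; exact fderiv_slice1 hfa

lemma diffAt_of_contDiffOn {f : ℝ×ℝ→ℝ} {U : Set (ℝ×ℝ)} (hU : IsOpen U)
    (hf : ContDiffOn ℝ (⊤:ℕ∞) f U) {p : ℝ×ℝ} (hp : p ∈ U) : DifferentiableAt ℝ f p :=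
  (hf.contDiffAt (hU.mem_nhds hp)).differentiableAt (by simp)

lemma contDiffOn_d2 {f : ℝ×ℝ→ℝ} {U : Set (ℝ×ℝ)} (hU : IsOpen U)
    (hf : ContDiffOn ℝ (⊤:ℕ∞) f U) : ContDiffOn ℝ (⊤:ℕ∞) (d2 f) U :=
  (((hf.fderiv_of_isOpen hU (by exact_mod_cast le_top)).clm_apply
    contDiffOn_const)).congr fun _ hp => d2_eq_fderiv (diffAt_of_contDiffOn hU hf hp)

noncomputable def psiAux (c₁ c₂ c₃ c₄ c₅ c₆ : ℝ) (q : ℝ × ℝ) : ℝ × ℝ :=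
  ((c₄ * q.1 - c₂) / (c₁ - c₃ * q.1),
    (c₁ * c₄ - c₂ * c₃) / (c₁ - c₃ * q.1) * q.2 - c₅ * ((c₄ * q.1 - c₂) / (c₁ - c₃ * q.1)) - c₆)

lemma phi_fst_denom {c₁ c₂ c₃ c₄ : ℝ} {p : ℝ × ℝ} (hden : c₃ * p.1 + c₄ ≠ 0) :
    c₁ - c₃ * ((c₁ * p.1 + c₂) / (c₃ * p.1 + c₄)) = (c₁ * c₄ - c₂ * c₃) / (c₃ * p.1 + c₄) := by
  field_simp; ring

lemma psi_phi (c₁ c₂ c₃ c₄ c₅ c₆ : ℝ) (hΔ : c₁ * c₄ - c₂ * c₃ ≠ 0) (p : ℝ × ℝ)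
    (hden : c₃ * p.1 + c₄ ≠ 0) :
    psiAux c₁ c₂ c₃ c₄ c₅ c₆ ((c₁ * p.1 + c₂) / (c₃ * p.1 + c₄),
      (p.2 + c₅ * p.1 + c₆) / (c₃ * p.1 + c₄)) = p := by
  have he := phi_fst_denom (c₁ := c₁) (c₂ := c₂) hden
  have hΔd : (c₁ * c₄ - c₂ * c₃) / (c₃ * p.1 + c₄) ≠ 0 := div_ne_zero hΔ hden
  unfold psiAux
  ext <;> simp only [] <;> rw [he]
  · have key : (c₄ * ((c₁ * p.1 + c₂) / (c₃ * p.1 + c₄)) - c₂) /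
        ((c₁ * c₄ - c₂ * c₃) / (c₃ * p.1 + c₄)) = p.1 := by
      rw [div_div_eq_mul_div, div_eq_iff hΔ, sub_mul, mul_assoc, div_mul_cancel₀ _ hden]; ring
    exact key
  · field_simp; ring

lemma psi_denom (c₁ c₂ c₃ c₄ c₅ c₆ : ℝ) (q : ℝ × ℝ) (he : c₁ - c₃ * q.1 ≠ 0) :
    c₃ * (psiAux c₁ c₂ c₃ c₄ c₅ c₆ q).1 + c₄ = (c₁ * c₄ - c₂ * c₃) / (c₁ - c₃ * q.1) := by
  unfold psiAux; field_simp; ring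

lemma phi_psi (c₁ c₂ c₃ c₄ c₅ c₆ : ℝ) (hΔ : c₁ * c₄ - c₂ * c₃ ≠ 0) (q : ℝ × ℝ)
    (he : c₁ - c₃ * q.1 ≠ 0) :
    ((c₁ * (psiAux c₁ c₂ c₃ c₄ c₅ c₆ q).1 + c₂) / (c₃ * (psiAux c₁ c₂ c₃ c₄ c₅ c₆ q).1 + c₄),
      ((psiAux c₁ c₂ c₃ c₄ c₅ c₆ q).2 + c₅ * (psiAux c₁ c₂ c₃ c₄ c₅ c₆ q).1 + c₆) /
        (c₃ * (psiAux c₁ c₂ c₃ c₄ c₅ c₆ q).1 + c₄)) = q := by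
  have hd := psi_denom c₁ c₂ c₃ c₄ c₅ c₆ q he
  have hΔd : (c₁ * c₄ - c₂ * c₃) / (c₁ - c₃ * q.1) ≠ 0 := div_ne_zero hΔ he
  rw [hd]
  unfold psiAux
  ext <;> simp only []
  · have key : (c₁ * ((c₄ * q.1 - c₂) / (c₁ - c₃ * q.1)) + c₂) /
        ((c₁ * c₄ - c₂ * c₃) / (c₁ - c₃ * q.1)) = q.1 := by
      rw [div_div_eq_mul_div, div_eq_iff hΔ, add_mul, mul_assoc, div_mul_cancel₀ _ he]; ring
    exact key
  · field_simp; ring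

lemma psiAux_contDiffOn (c₁ c₂ c₃ c₄ c₅ c₆ : ℝ) :
    ContDiffOn ℝ (⊤:ℕ∞) (psiAux c₁ c₂ c₃ c₄ c₅ c₆) {q : ℝ × ℝ | c₁ - c₃ * q.1 ≠ 0} := by
  unfold psiAux
  have hden : ContDiffOn ℝ (⊤:ℕ∞) (fun q : ℝ×ℝ => c₁ - c₃ * q.1)
      {q : ℝ × ℝ | c₁ - c₃ * q.1 ≠ 0} :=
    (contDiff_const.sub (contDiff_const.mul contDiff_fst)).contDiffOn
  have h1 : ContDiffOn ℝ (⊤:ℕ∞) (fun q : ℝ×ℝ => (c₄ * q.1 - c₂) / (c₁ - c₃ * q.1))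
      {q : ℝ × ℝ | c₁ - c₃ * q.1 ≠ 0} :=
    ((contDiff_const.mul contDiff_fst).sub contDiff_const).contDiffOn.div hden fun q hq => hq
  exact h1.prodMk ((((contDiffOn_const.div hden fun q hq => hq).mul
    contDiff_snd.contDiffOn).sub (contDiffOn_const.mul h1)).sub contDiffOn_const)

end Aux

section G

variable (c₁ c₂ c₃ c₄ c₅ c₆ : ℝ) (W0 W1 : ℝ → ℝ) (w : ℝ × ℝ → ℝ)

noncomputable def g0A : ℝ × ℝ → ℝ := fun p =>
  w p / ((c₁ * c₄ - c₂ * c₃) * (c₃ * p.1 + c₄))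
    - c₃ / ((c₁ * c₄ - c₂ * c₃) * (c₃ * p.1 + c₄) ^ 2) * (p.2 ^ 3 / 6)
    - (c₃ * c₆ - c₄ * c₅) / ((c₁ * c₄ - c₂ * c₃) * (c₃ * p.1 + c₄) ^ 2) * (p.2 ^ 2 / 2)
    + W1 p.1 * p.2 + W0 p.1

noncomputable def g1A : ℝ × ℝ → ℝ := fun p =>
  d2 w p / ((c₁ * c₄ - c₂ * c₃) * (c₃ * p.1 + c₄))
    - c₃ / ((c₁ * c₄ - c₂ * c₃) * (c₃ * p.1 + c₄) ^ 2) * (p.2 ^ 2 / 2)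
    - (c₃ * c₆ - c₄ * c₅) / ((c₁ * c₄ - c₂ * c₃) * (c₃ * p.1 + c₄) ^ 2) * p.2
    + W1 p.1

noncomputable def g2A : ℝ × ℝ → ℝ := fun p =>
  d2 (d2 w) p / ((c₁ * c₄ - c₂ * c₃) * (c₃ * p.1 + c₄))
    - c₃ * p.2 / ((c₁ * c₄ - c₂ * c₃) * (c₃ * p.1 + c₄) ^ 2)
    - (c₃ * c₆ - c₄ * c₅) / ((c₁ * c₄ - c₂ * c₃) * (c₃ * p.1 + c₄) ^ 2)

noncomputable def g3A : ℝ × ℝ → ℝ := fun p =>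
  d2 (d2 (d2 w)) p / ((c₁ * c₄ - c₂ * c₃) * (c₃ * p.1 + c₄))
    - c₃ / ((c₁ * c₄ - c₂ * c₃) * (c₃ * p.1 + c₄) ^ 2)

variable {Ω : Set (ℝ × ℝ)}

lemma denom_contDiffOn : ContDiffOn ℝ (⊤:ℕ∞)
    (fun p : ℝ×ℝ => (c₁ * c₄ - c₂ * c₃) * (c₃ * p.1 + c₄)) Ω :=
  (contDiff_const.mul ((contDiff_const.mul contDiff_fst).add contDiff_const)).contDiffOn

lemma denom_ne (hΔ : c₁ * c₄ - c₂ * c₃ ≠ 0) (hΩden : ∀ p ∈ Ω, c₃ * p.1 + c₄ ≠ 0) : ∀ p ∈ Ω, (c₁ * c₄ - c₂ * c₃) * (c₃ * p.1 + c₄) ≠ 0 :=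
  fun p hp => mul_ne_zero hΔ (hΩden p hp)

lemma denom2_contDiffOn : ContDiffOn ℝ (⊤:ℕ∞)
    (fun p : ℝ×ℝ => (c₁ * c₄ - c₂ * c₃) * (c₃ * p.1 + c₄) ^ 2) Ω :=
  (contDiff_const.mul (((contDiff_const.mul contDiff_fst).add contDiff_const).pow 2)).contDiffOn

lemma denom2_ne (hΔ : c₁ * c₄ - c₂ * c₃ ≠ 0) (hΩden : ∀ p ∈ Ω, c₃ * p.1 + c₄ ≠ 0) : ∀ p ∈ Ω, (c₁ * c₄ - c₂ * c₃) * (c₃ * p.1 + c₄) ^ 2 ≠ 0 :=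
  fun p hp => mul_ne_zero hΔ (pow_ne_zero 2 (hΩden p hp))

lemma g0A_contDiffOn (hΔ : c₁ * c₄ - c₂ * c₃ ≠ 0) (hΩden : ∀ p ∈ Ω, c₃ * p.1 + c₄ ≠ 0) (hW0 : ContDiff ℝ (⊤:ℕ∞) W0) (hW1 : ContDiff ℝ (⊤:ℕ∞) W1)
    (hw : ContDiffOn ℝ (⊤:ℕ∞) w Ω) :
    ContDiffOn ℝ (⊤:ℕ∞) (g0A c₁ c₂ c₃ c₄ c₅ c₆ W0 W1 w) Ω := by
  unfold g0A
  exact ((((hw.div (denom_contDiffOn c₁ c₂ c₃ c₄) (denom_ne c₁ c₂ c₃ c₄ hΔ hΩden)).sub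
    ((contDiffOn_const.div (denom2_contDiffOn c₁ c₂ c₃ c₄)
      (denom2_ne c₁ c₂ c₃ c₄ hΔ hΩden)).mul ((contDiff_snd.pow 3).div_const 6).contDiffOn)).sub
    ((contDiffOn_const.div (denom2_contDiffOn c₁ c₂ c₃ c₄)
      (denom2_ne c₁ c₂ c₃ c₄ hΔ hΩden)).mul ((contDiff_snd.pow 2).div_const 2).contDiffOn)).add
    (((hW1.comp contDiff_fst).mul contDiff_snd).contDiffOn)).add
    ((hW0.comp contDiff_fst).contDiffOn)

lemma g1A_contDiffOn (hΩ : IsOpen Ω) (hΔ : c₁ * c₄ - c₂ * c₃ ≠ 0) (hΩden : ∀ p ∈ Ω, c₃ * p.1 + c₄ ≠ 0) (hW1 : ContDiff ℝ (⊤:ℕ∞) W1) (hw : ContDiffOn ℝ (⊤:ℕ∞) w Ω) :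
    ContDiffOn ℝ (⊤:ℕ∞) (g1A c₁ c₂ c₃ c₄ c₅ c₆ W1 w) Ω := by
  unfold g1A
  exact (((((contDiffOn_d2 hΩ hw).div (denom_contDiffOn c₁ c₂ c₃ c₄)
    (denom_ne c₁ c₂ c₃ c₄ hΔ hΩden)).sub
    ((contDiffOn_const.div (denom2_contDiffOn c₁ c₂ c₃ c₄)
      (denom2_ne c₁ c₂ c₃ c₄ hΔ hΩden)).mul ((contDiff_snd.pow 2).div_const 2).contDiffOn)).sub
    ((contDiffOn_const.div (denom2_contDiffOn c₁ c₂ c₃ c₄)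
      (denom2_ne c₁ c₂ c₃ c₄ hΔ hΩden)).mul contDiff_snd.contDiffOn)).add
    ((hW1.comp contDiff_fst).contDiffOn))

lemma g2A_contDiffOn (hΩ : IsOpen Ω) (hΔ : c₁ * c₄ - c₂ * c₃ ≠ 0) (hΩden : ∀ p ∈ Ω, c₃ * p.1 + c₄ ≠ 0) (hw : ContDiffOn ℝ (⊤:ℕ∞) w Ω) :
    ContDiffOn ℝ (⊤:ℕ∞) (g2A c₁ c₂ c₃ c₄ c₅ c₆ w) Ω := by
  unfold g2A
  exact ((((contDiffOn_d2 hΩ (contDiffOn_d2 hΩ hw)).div (denom_contDiffOn c₁ c₂ c₃ c₄)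
    (denom_ne c₁ c₂ c₃ c₄ hΔ hΩden)).sub
    ((contDiff_const.mul contDiff_snd).contDiffOn.div (denom2_contDiffOn c₁ c₂ c₃ c₄)
      (denom2_ne c₁ c₂ c₃ c₄ hΔ hΩden))).sub
    (contDiffOn_const.div (denom2_contDiffOn c₁ c₂ c₃ c₄) (denom2_ne c₁ c₂ c₃ c₄ hΔ hΩden)))

end G

section Deriv

variable {c₁ c₂ c₃ c₄ c₅ c₆ : ℝ} {W0 W1 : ℝ → ℝ} {w : ℝ × ℝ → ℝ} {Ω : Set (ℝ × ℝ)}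

lemma d2_g0A (hΩ : IsOpen Ω) (hΔ : c₁ * c₄ - c₂ * c₃ ≠ 0)
    (hΩden : ∀ p ∈ Ω, c₃ * p.1 + c₄ ≠ 0) (hw : ContDiffOn ℝ (⊤:ℕ∞) w Ω) :
    ∀ p ∈ Ω, d2 (g0A c₁ c₂ c₃ c₄ c₅ c₆ W0 W1 w) p = g1A c₁ c₂ c₃ c₄ c₅ c₆ W1 w p := by
  intro p hp
  have hw2 := hasDerivAt_slice2 (diffAt_of_contDiffOn hΩ hw hp)
  have H := ((((hw2.div_const ((c₁ * c₄ - c₂ * c₃) * (c₃ * p.1 + c₄))).sub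
      (HasDerivAt.const_mul (c₃ / ((c₁ * c₄ - c₂ * c₃) * (c₃ * p.1 + c₄) ^ 2))
        ((hasDerivAt_pow 3 p.2).div_const 6))).sub
      (HasDerivAt.const_mul ((c₃ * c₆ - c₄ * c₅) / ((c₁ * c₄ - c₂ * c₃) * (c₃ * p.1 + c₄) ^ 2))
        ((hasDerivAt_pow 2 p.2).div_const 2))).add
      (HasDerivAt.const_mul (W1 p.1) (hasDerivAt_id p.2))).add_const (W0 p.1)
  have hfun : (fun s => g0A c₁ c₂ c₃ c₄ c₅ c₆ W0 W1 w (p.1, s)) =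
      (fun s => w (p.1, s) / ((c₁ * c₄ - c₂ * c₃) * (c₃ * p.1 + c₄))
        - c₃ / ((c₁ * c₄ - c₂ * c₃) * (c₃ * p.1 + c₄) ^ 2) * (s ^ 3 / 6)
        - (c₃ * c₆ - c₄ * c₅) / ((c₁ * c₄ - c₂ * c₃) * (c₃ * p.1 + c₄) ^ 2) * (s ^ 2 / 2)
        + W1 p.1 * id s + W0 p.1) := rfl
  rw [d2, hfun]; refine H.deriv.trans ?_; rw [g1A]
  push_cast
  ring

lemma d2_g1A (hΩ : IsOpen Ω) (hΔ : c₁ * c₄ - c₂ * c₃ ≠ 0)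
    (hΩden : ∀ p ∈ Ω, c₃ * p.1 + c₄ ≠ 0) (hw : ContDiffOn ℝ (⊤:ℕ∞) w Ω) :
    ∀ p ∈ Ω, d2 (g1A c₁ c₂ c₃ c₄ c₅ c₆ W1 w) p = g2A c₁ c₂ c₃ c₄ c₅ c₆ w p := by
  intro p hp
  have hw2 := hasDerivAt_slice2 (diffAt_of_contDiffOn hΩ (contDiffOn_d2 hΩ hw) hp)
  have H := ((((hw2.div_const ((c₁ * c₄ - c₂ * c₃) * (c₃ * p.1 + c₄))).sub
      (HasDerivAt.const_mul (c₃ / ((c₁ * c₄ - c₂ * c₃) * (c₃ * p.1 + c₄) ^ 2))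
        ((hasDerivAt_pow 2 p.2).div_const 2))).sub
      (HasDerivAt.const_mul ((c₃ * c₆ - c₄ * c₅) / ((c₁ * c₄ - c₂ * c₃) * (c₃ * p.1 + c₄) ^ 2))
        (hasDerivAt_id p.2))).add_const (W1 p.1))
  have hfun : (fun s => g1A c₁ c₂ c₃ c₄ c₅ c₆ W1 w (p.1, s)) =
      (fun s => d2 w (p.1, s) / ((c₁ * c₄ - c₂ * c₃) * (c₃ * p.1 + c₄))
        - c₃ / ((c₁ * c₄ - c₂ * c₃) * (c₃ * p.1 + c₄) ^ 2) * (s ^ 2 / 2)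
        - (c₃ * c₆ - c₄ * c₅) / ((c₁ * c₄ - c₂ * c₃) * (c₃ * p.1 + c₄) ^ 2) * id s
        + W1 p.1) := rfl
  rw [d2, hfun]; refine H.deriv.trans ?_; rw [g2A]
  push_cast
  ring

lemma d2_g2A (hΩ : IsOpen Ω) (hΔ : c₁ * c₄ - c₂ * c₃ ≠ 0)
    (hΩden : ∀ p ∈ Ω, c₃ * p.1 + c₄ ≠ 0) (hw : ContDiffOn ℝ (⊤:ℕ∞) w Ω) :
    ∀ p ∈ Ω, d2 (g2A c₁ c₂ c₃ c₄ c₅ c₆ w) p = g3A c₁ c₂ c₃ c₄ w p := by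
  intro p hp
  have hw2 := hasDerivAt_slice2
    (diffAt_of_contDiffOn hΩ (contDiffOn_d2 hΩ (contDiffOn_d2 hΩ hw)) hp)
  have H := (((hw2.div_const ((c₁ * c₄ - c₂ * c₃) * (c₃ * p.1 + c₄))).sub
      ((HasDerivAt.const_mul c₃ (hasDerivAt_id p.2)).div_const
        ((c₁ * c₄ - c₂ * c₃) * (c₃ * p.1 + c₄) ^ 2))).sub_const
      ((c₃ * c₆ - c₄ * c₅) / ((c₁ * c₄ - c₂ * c₃) * (c₃ * p.1 + c₄) ^ 2)))
  have hfun : (fun s => g2A c₁ c₂ c₃ c₄ c₅ c₆ w (p.1, s)) =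
      (fun s => d2 (d2 w) (p.1, s) / ((c₁ * c₄ - c₂ * c₃) * (c₃ * p.1 + c₄))
        - c₃ * id s / ((c₁ * c₄ - c₂ * c₃) * (c₃ * p.1 + c₄) ^ 2)
        - (c₃ * c₆ - c₄ * c₅) / ((c₁ * c₄ - c₂ * c₃) * (c₃ * p.1 + c₄) ^ 2)) := rfl
  rw [d2, hfun]; refine H.deriv.trans ?_; rw [g3A]
  ring

lemma d1gAux (A B D Δ c₃ E z : ℝ) (hΔ : Δ ≠ 0) (hD : D ≠ 0) :
    (A * (Δ * D) - B * (Δ * c₃)) / (Δ * D) ^ 2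
      - (0 * (Δ * D ^ 2) - c₃ * z * (Δ * (2 * D * c₃))) / (Δ * D ^ 2) ^ 2
      - (0 * (Δ * D ^ 2) - E * (Δ * (2 * D * c₃))) / (Δ * D ^ 2) ^ 2
    = A / (Δ * D) - c₃ * B / (Δ * D ^ 2) + 2 * c₃ ^ 2 * z / (Δ * D ^ 3)
      + 2 * c₃ * E / (Δ * D ^ 3) := by
  field_simp
  ring

lemma d1_g2A (hΩ : IsOpen Ω) (hΔ : c₁ * c₄ - c₂ * c₃ ≠ 0)
    (hΩden : ∀ p ∈ Ω, c₃ * p.1 + c₄ ≠ 0) (hw : ContDiffOn ℝ (⊤:ℕ∞) w Ω) :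
    ∀ p ∈ Ω, d1 (g2A c₁ c₂ c₃ c₄ c₅ c₆ w) p =
      d1 (d2 (d2 w)) p / ((c₁ * c₄ - c₂ * c₃) * (c₃ * p.1 + c₄))
        - c₃ * d2 (d2 w) p / ((c₁ * c₄ - c₂ * c₃) * (c₃ * p.1 + c₄) ^ 2)
        + 2 * c₃ ^ 2 * p.2 / ((c₁ * c₄ - c₂ * c₃) * (c₃ * p.1 + c₄) ^ 3)
        + 2 * c₃ * (c₃ * c₆ - c₄ * c₅) / ((c₁ * c₄ - c₂ * c₃) * (c₃ * p.1 + c₄) ^ 3) := by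
  intro p hp
  have hde := hΩden p hp
  have hw1 := hasDerivAt_slice1
    (diffAt_of_contDiffOn hΩ (contDiffOn_d2 hΩ (contDiffOn_d2 hΩ hw)) hp)
  have hden : HasDerivAt (fun s => (c₁ * c₄ - c₂ * c₃) * (c₃ * s + c₄))
      ((c₁ * c₄ - c₂ * c₃) * c₃) p.1 := by
    simpa using (HasDerivAt.const_mul (c₁ * c₄ - c₂ * c₃)
      ((HasDerivAt.const_mul c₃ (hasDerivAt_id p.1)).add_const c₄))
  have hden2 : HasDerivAt (fun s => (c₁ * c₄ - c₂ * c₃) * (c₃ * s + c₄) ^ 2)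
      ((c₁ * c₄ - c₂ * c₃) * (2 * (c₃ * p.1 + c₄) * c₃)) p.1 := by
    have := (((HasDerivAt.const_mul c₃ (hasDerivAt_id p.1)).add_const c₄).pow 2).const_mul
      (c₁ * c₄ - c₂ * c₃)
    refine this.congr_deriv ?_
    simp only [id_eq]
    push_cast; ring
  have hne : (c₁ * c₄ - c₂ * c₃) * (c₃ * p.1 + c₄) ≠ 0 := mul_ne_zero hΔ hde
  have hne2 : (c₁ * c₄ - c₂ * c₃) * (c₃ * p.1 + c₄) ^ 2 ≠ 0 :=
    mul_ne_zero hΔ (pow_ne_zero 2 hde)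
  have H := ((hw1.div hden hne).sub
      ((hasDerivAt_const p.1 (c₃ * p.2)).div hden2 hne2)).sub
      ((hasDerivAt_const p.1 (c₃ * c₆ - c₄ * c₅)).div hden2 hne2)
  have hfun : (fun s => g2A c₁ c₂ c₃ c₄ c₅ c₆ w (s, p.2)) =
      (fun s => d2 (d2 w) (s, p.2) / ((c₁ * c₄ - c₂ * c₃) * (c₃ * s + c₄))
        - c₃ * p.2 / ((c₁ * c₄ - c₂ * c₃) * (c₃ * s + c₄) ^ 2)
        - (c₃ * c₆ - c₄ * c₅) / ((c₁ * c₄ - c₂ * c₃) * (c₃ * s + c₄) ^ 2)) := rfl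
  rw [d1, hfun]; refine H.deriv.trans ?_
  exact d1gAux _ _ _ _ _ _ _ hΔ hde

end Deriv

set_option maxHeartbeats 1000000 in
lemma final_identity (c₃ c₄ c₅ c₆ Δ n e z a b : ℝ) (hΔ : Δ ≠ 0) (he : e ≠ 0)
    (hrel : c₃ * n + c₄ * e = Δ) :
    (2:ℕ) * (Δ / e) ^ (2 - 1) *
            ((0 * e - Δ * (0 - c₃ * 1)) / e ^ 2) *
          (a / (Δ * (Δ / e)) -
              c₃ * (Δ / e * z - c₅ * (n / e) - c₆) / (Δ * (Δ / e) ^ 2) -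
            (c₃ * c₆ - c₄ * c₅) / (Δ * (Δ / e) ^ 2)) +
        (Δ / e) ^ 2 *
          ((c₄ * 1 * e - n * (0 - c₃ * 1)) / e ^ 2 *
              (-(a * b) / (Δ * (Δ / e)) -
                    c₃ * a / (Δ * (Δ / e) ^ 2) +
                  2 * c₃ ^ 2 * (Δ / e * z - c₅ * (n / e) - c₆) / (Δ * (Δ / e) ^ 3) +
                2 * c₃ * (c₃ * c₆ - c₄ * c₅) / (Δ * (Δ / e) ^ 3)) +
            ((0 * e - Δ * (0 - c₃ * 1)) / e ^ 2 * z -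
                c₅ * ((c₄ * 1 * e - n * (0 - c₃ * 1)) / e ^ 2)) *
              (b / (Δ * (Δ / e)) - c₃ / (Δ * (Δ / e) ^ 2))) +
      (Δ / e) ^ 2 *
          (a / (Δ * (Δ / e)) -
              c₃ * (Δ / e * z - c₅ * (n / e) - c₆) / (Δ * (Δ / e) ^ 2) -
            (c₃ * c₆ - c₄ * c₅) / (Δ * (Δ / e) ^ 2)) *
        ((Δ / e) ^ 3 *
          (b / (Δ * (Δ / e)) - c₃ / (Δ * (Δ / e) ^ 2))) =
    0 := by
  subst hrel
  field_simp
  ring_nf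
  field_simp
  ring

lemma fderiv_apply_eq {g : ℝ×ℝ→ℝ} {P : ℝ×ℝ} (h : DifferentiableAt ℝ g P) (a b : ℝ) :
    fderiv ℝ g P (a, b) = a * d1 g P + b * d2 g P := by
  have hvec : ((a:ℝ), b) = a • ((1:ℝ),(0:ℝ)) + b • ((0:ℝ),(1:ℝ)) := by
    simp [Prod.ext_iff]
  rw [hvec, map_add, map_smul, map_smul, smul_eq_mul, smul_eq_mul,
    d1_eq_fderiv h, d2_eq_fderiv h]

set_option maxHeartbeats 1000000 in
/-- The verification part of the theorem on the point-symmetry pseudogroup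
of the reduced equation: the transformation `Φ` is injective on `Ω`, `Φ(Ω)` is open, and the
transformed function `v` is a smooth solution of the reduced equation on `Φ(Ω)`. -/
theorem statement3 (c₁ c₂ c₃ c₄ c₅ c₆ : ℝ) (hΔ : c₁ * c₄ - c₂ * c₃ ≠ 0)
    (W0 W1 : ℝ → ℝ) (hW0 : ContDiff ℝ (⊤ : ℕ∞) W0) (hW1 : ContDiff ℝ (⊤ : ℕ∞) W1)
    (Ω : Set (ℝ × ℝ)) (hΩ : IsOpen Ω) (hΩden : ∀ p ∈ Ω, c₃ * p.1 + c₄ ≠ 0)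
    (w : ℝ × ℝ → ℝ) (hw : ContDiffOn ℝ (⊤ : ℕ∞) w Ω)
    (hweq : ∀ p ∈ Ω, d1 (d2 (d2 w)) p + d2 (d2 w) p * d2 (d2 (d2 w)) p = 0)
    (Φ : ℝ × ℝ → ℝ × ℝ)
    (hΦ : ∀ p : ℝ × ℝ, Φ p = ((c₁ * p.1 + c₂) / (c₃ * p.1 + c₄),
      (p.2 + c₅ * p.1 + c₆) / (c₃ * p.1 + c₄))) :
    Set.InjOn Φ Ω ∧ IsOpen (Φ '' Ω) ∧
      ∀ v : ℝ × ℝ → ℝ,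
        (∀ p ∈ Ω, v (Φ p) =
          w p / ((c₁ * c₄ - c₂ * c₃) * (c₃ * p.1 + c₄))
            - c₃ / ((c₁ * c₄ - c₂ * c₃) * (c₃ * p.1 + c₄) ^ 2) * (p.2 ^ 3 / 6)
            - (c₃ * c₆ - c₄ * c₅) / ((c₁ * c₄ - c₂ * c₃) * (c₃ * p.1 + c₄) ^ 2) * (p.2 ^ 2 / 2)
            + W1 p.1 * p.2 + W0 p.1) →
        ContDiffOn ℝ (⊤ : ℕ∞) v (Φ '' Ω) ∧
          ∀ q ∈ Φ '' Ω, d1 (d2 (d2 v)) q + d2 (d2 v) q * d2 (d2 (d2 v)) q = 0 := by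
  have hΦmemV : ∀ p ∈ Ω, c₁ - c₃ * (Φ p).1 ≠ 0 := by
    intro p hp
    rw [hΦ p]
    simp only
    rw [phi_fst_denom (hΩden p hp)]
    exact div_ne_zero hΔ (hΩden p hp)
  have hψΦ : ∀ p ∈ Ω, psiAux c₁ c₂ c₃ c₄ c₅ c₆ (Φ p) = p := by
    intro p hp; rw [hΦ p]; exact psi_phi c₁ c₂ c₃ c₄ c₅ c₆ hΔ p (hΩden p hp)
  have hinj : Set.InjOn Φ Ω := fun p hp p' hp' h => by
    rw [← hψΦ p hp, ← hψΦ p' hp', h]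
  have himg : Φ '' Ω = {q : ℝ×ℝ | c₁ - c₃ * q.1 ≠ 0} ∩ psiAux c₁ c₂ c₃ c₄ c₅ c₆ ⁻¹' Ω := by
    ext q; constructor
    · rintro ⟨p, hp, rfl⟩
      exact ⟨hΦmemV p hp, by simp only [Set.mem_preimage, hψΦ p hp]; exact hp⟩
    · rintro ⟨hq1, hq2⟩
      exact ⟨psiAux c₁ c₂ c₃ c₄ c₅ c₆ q, hq2,
        by rw [hΦ]; exact phi_psi c₁ c₂ c₃ c₄ c₅ c₆ hΔ q hq1⟩
  have hVopen : IsOpen {q : ℝ×ℝ | c₁ - c₃ * q.1 ≠ 0} := by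
    have hc : Continuous fun q : ℝ×ℝ => c₁ - c₃ * q.1 := by continuity
    exact isOpen_compl_singleton.preimage hc
  have hopen : IsOpen (Φ '' Ω) := by
    rw [himg]
    exact (psiAux_contDiffOn c₁ c₂ c₃ c₄ c₅ c₆).continuousOn.isOpen_inter_preimage hVopen hΩ
  refine ⟨hinj, hopen, ?_⟩
  intro v hv
  have hmem : ∀ q ∈ Φ '' Ω, psiAux c₁ c₂ c₃ c₄ c₅ c₆ q ∈ Ω ∧ c₁ - c₃ * q.1 ≠ 0 := by
    intro q hq; rw [himg] at hq; exact ⟨hq.2, hq.1⟩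
  have hveq : ∀ q ∈ Φ '' Ω,
      v q = g0A c₁ c₂ c₃ c₄ c₅ c₆ W0 W1 w (psiAux c₁ c₂ c₃ c₄ c₅ c₆ q) := by
    rintro q ⟨p, hp, rfl⟩
    rw [hψΦ p hp, hv p hp]; rfl
  have hsmooth : ContDiffOn ℝ (⊤:ℕ∞) v (Φ '' Ω) := by
    refine ContDiffOn.congr ?_ hveq
    exact (g0A_contDiffOn c₁ c₂ c₃ c₄ c₅ c₆ W0 W1 w hΔ hΩden hW0 hW1 hw).comp
      ((psiAux_contDiffOn c₁ c₂ c₃ c₄ c₅ c₆).mono fun q hq => (hmem q hq).2)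
      (fun q hq => (hmem q hq).1)
  -- transfer lemma for second-variable derivatives
  have trans : ∀ (c : ℝ → ℝ) (u g : ℝ×ℝ→ℝ), ContDiffOn ℝ (⊤:ℕ∞) g Ω →
      (∀ q ∈ Φ '' Ω, u q = c q.1 * g (psiAux c₁ c₂ c₃ c₄ c₅ c₆ q)) →
      ∀ q ∈ Φ '' Ω, d2 u q =
        c q.1 * ((c₁ * c₄ - c₂ * c₃) / (c₁ - c₃ * q.1)
          * d2 g (psiAux c₁ c₂ c₃ c₄ c₅ c₆ q)) := by
    intro c u g hg hu q hq
    obtain ⟨hpΩ, he⟩ := hmem q hq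
    have hnhds : (fun s : ℝ => ((q.1 : ℝ), s)) ⁻¹' (Φ '' Ω) ∈ nhds q.2 :=
      (continuous_const.prodMk continuous_id).continuousAt.preimage_mem_nhds
        (hopen.mem_nhds hq)
    have hev : (fun s => u (q.1, s)) =ᶠ[nhds q.2]
        (fun s => c q.1 * g ((psiAux c₁ c₂ c₃ c₄ c₅ c₆ q).1,
          (c₁ * c₄ - c₂ * c₃) / (c₁ - c₃ * q.1) * s
            - c₅ * (psiAux c₁ c₂ c₃ c₄ c₅ c₆ q).1 - c₆)) := by
      filter_upwards [hnhds] with s hs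
      rw [hu _ hs]; rfl
    have hgs : HasDerivAt (fun t => g ((psiAux c₁ c₂ c₃ c₄ c₅ c₆ q).1, t))
        (d2 g (psiAux c₁ c₂ c₃ c₄ c₅ c₆ q)) (psiAux c₁ c₂ c₃ c₄ c₅ c₆ q).2 :=
      hasDerivAt_slice2 (diffAt_of_contDiffOn hΩ hg hpΩ)
    have haff : HasDerivAt (fun s : ℝ => (c₁ * c₄ - c₂ * c₃) / (c₁ - c₃ * q.1) * s
        - c₅ * (psiAux c₁ c₂ c₃ c₄ c₅ c₆ q).1 - c₆)
        ((c₁ * c₄ - c₂ * c₃) / (c₁ - c₃ * q.1) * 1) q.2 := by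
      exact (((hasDerivAt_id q.2).const_mul _).sub_const _).sub_const _
    have H : HasDerivAt (fun s => c q.1 * g ((psiAux c₁ c₂ c₃ c₄ c₅ c₆ q).1,
        (c₁ * c₄ - c₂ * c₃) / (c₁ - c₃ * q.1) * s
          - c₅ * (psiAux c₁ c₂ c₃ c₄ c₅ c₆ q).1 - c₆))
        (c q.1 * (d2 g (psiAux c₁ c₂ c₃ c₄ c₅ c₆ q)
          * ((c₁ * c₄ - c₂ * c₃) / (c₁ - c₃ * q.1) * 1))) q.2 := by
      exact (HasDerivAt.comp q.2 hgs haff).const_mul _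
    have : d2 u q = _ := hev.deriv_eq.trans H.deriv
    rw [this]; ring
  set ψ := psiAux c₁ c₂ c₃ c₄ c₅ c₆ with hψdef
  have h1 : ∀ q ∈ Φ '' Ω, d2 v q =
      ((c₁ * c₄ - c₂ * c₃) / (c₁ - c₃ * q.1)) * g1A c₁ c₂ c₃ c₄ c₅ c₆ W1 w (ψ q) := by
    intro q hq
    have := trans (fun _ => 1) v (g0A c₁ c₂ c₃ c₄ c₅ c₆ W0 W1 w)
      (g0A_contDiffOn c₁ c₂ c₃ c₄ c₅ c₆ W0 W1 w hΔ hΩden hW0 hW1 hw)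
      (fun q hq => by rw [hveq q hq, one_mul]) q hq
    rw [this, d2_g0A hΩ hΔ hΩden hw _ (hmem q hq).1]
    ring
  have h2 : ∀ q ∈ Φ '' Ω, d2 (d2 v) q =
      ((c₁ * c₄ - c₂ * c₃) / (c₁ - c₃ * q.1)) ^ 2 * g2A c₁ c₂ c₃ c₄ c₅ c₆ w (ψ q) := by
    intro q hq
    have := trans (fun t => (c₁ * c₄ - c₂ * c₃) / (c₁ - c₃ * t)) (d2 v)
      (g1A c₁ c₂ c₃ c₄ c₅ c₆ W1 w)
      (g1A_contDiffOn c₁ c₂ c₃ c₄ c₅ c₆ W1 w hΩ hΔ hΩden hW1 hw) h1 q hq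
    rw [this, d2_g1A hΩ hΔ hΩden hw _ (hmem q hq).1]
    ring
  have h3 : ∀ q ∈ Φ '' Ω, d2 (d2 (d2 v)) q =
      ((c₁ * c₄ - c₂ * c₃) / (c₁ - c₃ * q.1)) ^ 3 * g3A c₁ c₂ c₃ c₄ w (ψ q) := by
    intro q hq
    have := trans (fun t => ((c₁ * c₄ - c₂ * c₃) / (c₁ - c₃ * t)) ^ 2) (d2 (d2 v))
      (g2A c₁ c₂ c₃ c₄ c₅ c₆ w)
      (g2A_contDiffOn c₁ c₂ c₃ c₄ c₅ c₆ w hΩ hΔ hΩden hw) h2 q hq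
    rw [this, d2_g2A hΩ hΔ hΩden hw _ (hmem q hq).1]
    ring
  refine ⟨hsmooth, ?_⟩
  intro q hq
  obtain ⟨hpΩ, he⟩ := hmem q hq
  -- first-variable derivative of d2 (d2 v)
  have hnhds1 : (fun s : ℝ => (s, (q.2 : ℝ))) ⁻¹' (Φ '' Ω) ∈ nhds q.1 :=
    (continuous_id.prodMk continuous_const).continuousAt.preimage_mem_nhds
      (hopen.mem_nhds hq)
  have hev1 : (fun s => d2 (d2 v) (s, q.2)) =ᶠ[nhds q.1]
      (fun s => ((c₁ * c₄ - c₂ * c₃) / (c₁ - c₃ * s)) ^ 2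
        * g2A c₁ c₂ c₃ c₄ c₅ c₆ w (ψ (s, q.2))) := by
    filter_upwards [hnhds1] with s hs
    exact h2 (s, q.2) hs
  have hden0 : HasDerivAt (fun s : ℝ => c₁ - c₃ * s) (0 - c₃ * 1) q.1 :=
    (hasDerivAt_const q.1 c₁).sub ((hasDerivAt_id q.1).const_mul c₃)
  have hKf : HasDerivAt (fun s : ℝ => (c₁ * c₄ - c₂ * c₃) / (c₁ - c₃ * s))
      ((0 * (c₁ - c₃ * q.1) - (c₁ * c₄ - c₂ * c₃) * (0 - c₃ * 1)) / (c₁ - c₃ * q.1) ^ 2)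
      q.1 := (hasDerivAt_const q.1 (c₁ * c₄ - c₂ * c₃)).div hden0 he
  have hKf2 := hKf.pow 2
  have hψ1 : HasDerivAt (fun s : ℝ => (c₄ * s - c₂) / (c₁ - c₃ * s))
      ((c₄ * 1 * (c₁ - c₃ * q.1) - (c₄ * q.1 - c₂) * (0 - c₃ * 1)) / (c₁ - c₃ * q.1) ^ 2)
      q.1 := (((hasDerivAt_id q.1).const_mul c₄).sub_const c₂).div hden0 he
  have hsec : HasDerivAt (fun s : ℝ => (c₁ * c₄ - c₂ * c₃) / (c₁ - c₃ * s) * q.2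
      - c₅ * ((c₄ * s - c₂) / (c₁ - c₃ * s)) - c₆)
      ((0 * (c₁ - c₃ * q.1) - (c₁ * c₄ - c₂ * c₃) * (0 - c₃ * 1)) / (c₁ - c₃ * q.1) ^ 2 * q.2
        - c₅ * ((c₄ * 1 * (c₁ - c₃ * q.1) - (c₄ * q.1 - c₂) * (0 - c₃ * 1))
          / (c₁ - c₃ * q.1) ^ 2)) q.1 :=
    ((hKf.mul_const q.2).sub (hψ1.const_mul c₅)).sub_const c₆
  have hcurve : HasDerivAt (fun s : ℝ => ψ (s, q.2))
      (((c₄ * 1 * (c₁ - c₃ * q.1) - (c₄ * q.1 - c₂) * (0 - c₃ * 1)) / (c₁ - c₃ * q.1) ^ 2,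
        (0 * (c₁ - c₃ * q.1) - (c₁ * c₄ - c₂ * c₃) * (0 - c₃ * 1)) / (c₁ - c₃ * q.1) ^ 2 * q.2
          - c₅ * ((c₄ * 1 * (c₁ - c₃ * q.1) - (c₄ * q.1 - c₂) * (0 - c₃ * 1))
            / (c₁ - c₃ * q.1) ^ 2))) q.1 := by
    exact HasDerivAt.prodMk hψ1 hsec
  have hdiffg2 : DifferentiableAt ℝ (g2A c₁ c₂ c₃ c₄ c₅ c₆ w) (ψ q) :=
    diffAt_of_contDiffOn hΩ (g2A_contDiffOn c₁ c₂ c₃ c₄ c₅ c₆ w hΩ hΔ hΩden hw) hpΩ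
  have hchain := hdiffg2.hasFDerivAt.comp_hasDerivAt q.1 hcurve
  have H := hKf2.mul hchain
  have hd1 : d1 (d2 (d2 v)) q = _ := hev1.deriv_eq.trans H.deriv
  rw [hd1, h2 q hq, h3 q hq]
  rw [fderiv_apply_eq hdiffg2]
  rw [d1_g2A hΩ hΔ hΩden hw _ hpΩ, d2_g2A hΩ hΔ hΩden hw _ hpΩ]
  have hh1 : d1 (d2 (d2 w)) (ψ q) = -(d2 (d2 w) (ψ q) * d2 (d2 (d2 w)) (ψ q)) := by
    have := hweq (ψ q) hpΩ; linarith
  rw [hh1]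
  simp only [g2A, g3A, Function.comp]
  have heq1 : c₃ * (ψ q).1 + c₄ = (c₁ * c₄ - c₂ * c₃) / (c₁ - c₃ * q.1) :=
    psi_denom c₁ c₂ c₃ c₄ c₅ c₆ q he
  have heq2 : (ψ q).2 = (c₁ * c₄ - c₂ * c₃) / (c₁ - c₃ * q.1) * q.2
      - c₅ * (ψ q).1 - c₆ := rfl
  have heq0 : ψ (q.1, q.2) = ψ q := rfl
  have hx : (ψ q).1 = (c₄ * q.1 - c₂) / (c₁ - c₃ * q.1) := rfl
  rw [heq0, heq1, heq2, hx]
  exact final_identity c₃ c₄ c₅ c₆ (c₁ * c₄ - c₂ * c₃) (c₄ * q.1 - c₂) (c₁ - c₃ * q.1) q.2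
    (d2 (d2 w) (ψ q)) (d2 (d2 (d2 w)) (ψ q)) hΔ he (by ring)
end

section
/- Let I ⊆ ℝ be an open interval, ρ : I → ℝ smooth with ρ and ρ' nowhere zero on I, and ζ : I → ℝ smooth with ζ'(t) = 2(ρ(t)³ − 1)/ρ(t)³. Let w : ℝ² → ℝ be a smooth solution of the reduced equation, and let c₁,…,c₅ ∈ ℝ with c₁c₄ − c₂c₃ = Δ ∈ {1,−1}. On the open set D := {(t,x,y) ∈ I × ℝ² : c₃ζ(t) + c₄ ≠ 0}, writing z₁ := ζ(t) and z₂ := y/ρ(t) − x, the function u := Δ(c₃z₁+c₄)·w((c₁z₁+c₂)/(c₃z₁+c₄), (z₂+c₅z₁)/(c₃z₁+c₄)) + c₃z₂³/(6(c₃z₁+c₄)) − c₄c₅z₂²/(2(c₃z₁+c₄)) − (ρ'(t)/(6ρ(t)))·y³ is a smooth solution of the dispersionless Nyzhnyk equation on D. -/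
lemma d1_eq {f : ℝ × ℝ → ℝ} (hf : ContDiff ℝ (⊤:ℕ∞) f) (p : ℝ × ℝ) :
    d1 f p = fderiv ℝ f p (1, 0) := by
  have h1 : HasDerivAt (fun s : ℝ => (s, p.2)) ((1:ℝ), (0:ℝ)) p.1 :=
    (hasDerivAt_id p.1).prodMk (hasDerivAt_const p.1 p.2)
  have hfd : HasFDerivAt f (fderiv ℝ f p) p := (hf.differentiable (by norm_num) p).hasFDerivAt
  have := hfd.comp_hasDerivAt p.1 (by simpa using h1)
  exact this.deriv

lemma d2_eq {f : ℝ × ℝ → ℝ} (hf : ContDiff ℝ (⊤:ℕ∞) f) (p : ℝ × ℝ) :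
    d2 f p = fderiv ℝ f p (0, 1) := by
  have h1 : HasDerivAt (fun s : ℝ => (p.1, s)) ((0:ℝ), (1:ℝ)) p.2 :=
    (hasDerivAt_const p.2 p.1).prodMk (hasDerivAt_id p.2)
  have hfd : HasFDerivAt f (fderiv ℝ f p) p := (hf.differentiable (by norm_num) p).hasFDerivAt
  have := hfd.comp_hasDerivAt p.2 (by simpa using h1)
  exact this.deriv

lemma contDiff_d2 {f : ℝ × ℝ → ℝ} (hf : ContDiff ℝ (⊤:ℕ∞) f) : ContDiff ℝ (⊤:ℕ∞) (d2 f) := by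
  have : d2 f = fun p => fderiv ℝ f p (0, 1) := funext (d2_eq hf)
  rw [this]
  exact (hf.fderiv_right (by norm_num)).clm_apply contDiff_const

lemma hasDerivAt_comp2 {f : ℝ × ℝ → ℝ} (hf : ContDiff ℝ (⊤:ℕ∞) f)
    {α β : ℝ → ℝ} {a' b' s : ℝ} (hα : HasDerivAt α a' s) (hβ : HasDerivAt β b' s) :
    HasDerivAt (fun r => f (α r, β r))
      (a' * d1 f (α s, β s) + b' * d2 f (α s, β s)) s := by
  have hfd : HasFDerivAt f (fderiv ℝ f (α s, β s)) (α s, β s) :=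
    (hf.differentiable (by norm_num) _).hasFDerivAt
  have h := hfd.comp_hasDerivAt s (hα.prodMk hβ)
  have hv : ((a':ℝ), (b':ℝ)) = a' • ((1:ℝ), (0:ℝ)) + b' • ((0:ℝ), (1:ℝ)) := by
    simp [Prod.ext_iff]
  rw [d1_eq hf, d2_eq hf]
  refine h.congr_deriv ?_
  rw [hv, map_add, map_smul, map_smul]
  simp [mul_comm]

/-- Partial derivative with respect to `t` of a function on `ℝ³ = ℝ_t × ℝ_x × ℝ_y`. -/
noncomputable def Dt (f : ℝ × ℝ × ℝ → ℝ) (p : ℝ × ℝ × ℝ) : ℝ :=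
  deriv (fun s => f (s, p.2.1, p.2.2)) p.1

/-- Partial derivative with respect to `x`. -/
noncomputable def Dx (f : ℝ × ℝ × ℝ → ℝ) (p : ℝ × ℝ × ℝ) : ℝ :=
  deriv (fun s => f (p.1, s, p.2.2)) p.2.1

/-- Partial derivative with respect to `y`. -/
noncomputable def Dy (f : ℝ × ℝ × ℝ → ℝ) (p : ℝ × ℝ × ℝ) : ℝ :=
  deriv (fun s => f (p.1, p.2.1, s)) p.2.2

/-- `u` is a smooth solution of the dispersionless Nyzhnyk equation
`u_txy = (u_xx·u_xy)_x + (u_xy·u_yy)_y` on `D`. -/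
def IsDNSolOn (u : ℝ × ℝ × ℝ → ℝ) (D : Set (ℝ × ℝ × ℝ)) : Prop :=
  ContDiffOn ℝ (⊤ : ℕ∞) u D ∧
    ∀ p ∈ D, Dt (Dx (Dy u)) p =
      Dx (fun q => Dx (Dx u) q * Dx (Dy u) q) p +
        Dy (fun q => Dx (Dy u) q * Dy (Dy u) q) p

set_option maxHeartbeats 2000000 in
/-- Extension of the invariant solutions of the dispersionless Nyzhnyk
equation by hidden symmetries, for nonconstant `ρ` (with `ρ` and `ρ'` nowhere zero). -/
theorem statement4 (I : Set ℝ) (hIopen : IsOpen I) (hIint : I.OrdConnected)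
    (ρ ζ : ℝ → ℝ) (hρ : ContDiffOn ℝ (⊤ : ℕ∞) ρ I) (hρ0 : ∀ t ∈ I, ρ t ≠ 0)
    (hρ'0 : ∀ t ∈ I, deriv ρ t ≠ 0)
    (hζ : ContDiffOn ℝ (⊤ : ℕ∞) ζ I)
    (hζ' : ∀ t ∈ I, deriv ζ t = 2 * (ρ t ^ 3 - 1) / ρ t ^ 3)
    (w : ℝ × ℝ → ℝ) (hw : ContDiff ℝ (⊤ : ℕ∞) w)
    (hweq : ∀ p, d1 (d2 (d2 w)) p + d2 (d2 w) p * d2 (d2 (d2 w)) p = 0)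
    (c₁ c₂ c₃ c₄ c₅ : ℝ)
    (hΔ : c₁ * c₄ - c₂ * c₃ = 1 ∨ c₁ * c₄ - c₂ * c₃ = -1)
    (u : ℝ × ℝ × ℝ → ℝ)
    (hu : ∀ t x y, u (t, x, y) =
      (c₁ * c₄ - c₂ * c₃) * (c₃ * ζ t + c₄) *
          w ((c₁ * ζ t + c₂) / (c₃ * ζ t + c₄),
            ((y / ρ t - x) + c₅ * ζ t) / (c₃ * ζ t + c₄))
        + c₃ * (y / ρ t - x) ^ 3 / (6 * (c₃ * ζ t + c₄))
        - c₄ * c₅ * (y / ρ t - x) ^ 2 / (2 * (c₃ * ζ t + c₄))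
        - deriv ρ t / (6 * ρ t) * y ^ 3) :
    IsDNSolOn u {p : ℝ × ℝ × ℝ | p.1 ∈ I ∧ c₃ * ζ p.1 + c₄ ≠ 0} := by
  have hW2 : ContDiff ℝ (⊤:ℕ∞) (d2 w) := contDiff_d2 hw
  have hW22 : ContDiff ℝ (⊤:ℕ∞) (d2 (d2 w)) := contDiff_d2 hW2
  -- F1 : formula for Dy u
  have F1 : ∀ t, t ∈ I → c₃ * ζ t + c₄ ≠ 0 → ∀ x y : ℝ,
      Dy u (t, x, y) =
        ((c₁ * c₄ - c₂ * c₃) * d2 w ((c₁ * ζ t + c₂) / (c₃ * ζ t + c₄),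
            (y / ρ t - x + c₅ * ζ t) / (c₃ * ζ t + c₄))
          + c₃ * (y / ρ t - x) ^ 2 / (2 * (c₃ * ζ t + c₄))
          - c₄ * c₅ * (y / ρ t - x) / (c₃ * ζ t + c₄)) / ρ t
        - deriv ρ t / (2 * ρ t) * y ^ 2 := by
    intro t ht hA x y
    have hr := hρ0 t ht
    have hfun : (fun s => u (t, x, s)) = (fun s =>
        (c₁ * c₄ - c₂ * c₃) * (c₃ * ζ t + c₄) *
          w ((c₁ * ζ t + c₂) / (c₃ * ζ t + c₄), (s / ρ t - x + c₅ * ζ t) / (c₃ * ζ t + c₄))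
        + c₃ * (s / ρ t - x) ^ 3 / (6 * (c₃ * ζ t + c₄))
        - c₄ * c₅ * (s / ρ t - x) ^ 2 / (2 * (c₃ * ζ t + c₄))
        - deriv ρ t / (6 * ρ t) * s ^ 3) := funext fun s => hu t x s
    have hz : HasDerivAt (fun s : ℝ => s / ρ t - x) (1 / ρ t) y :=
      ((hasDerivAt_id y).div_const (ρ t)).sub_const x
    have hZ2 : HasDerivAt (fun s : ℝ => (s / ρ t - x + c₅ * ζ t) / (c₃ * ζ t + c₄))
        ((1 / ρ t) / (c₃ * ζ t + c₄)) y := (hz.add_const _).div_const _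
    have hwc := hasDerivAt_comp2 hw
      (hasDerivAt_const y ((c₁ * ζ t + c₂) / (c₃ * ζ t + c₄))) hZ2
    have hD := (((hwc.const_mul ((c₁ * c₄ - c₂ * c₃) * (c₃ * ζ t + c₄))).add
        (((hz.pow 3).const_mul c₃).div_const (6 * (c₃ * ζ t + c₄)))).sub
        (((hz.pow 2).const_mul (c₄ * c₅)).div_const (2 * (c₃ * ζ t + c₄)))).sub
        ((hasDerivAt_pow 3 y).const_mul (deriv ρ t / (6 * ρ t)))
    have hD' := hD.congr_of_eventuallyEq (Filter.EventuallyEq.of_eq hfun)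
    have h0 : Dy u (t, x, y) = deriv (fun s => u (t, x, s)) y := rfl
    rw [h0, hD'.deriv]
    norm_num
    field_simp
    ring

  -- F3x : formula for Dx u
  have F3x : ∀ t, t ∈ I → c₃ * ζ t + c₄ ≠ 0 → ∀ x y : ℝ,
      Dx u (t, x, y) =
        -((c₁ * c₄ - c₂ * c₃) * (c₃ * ζ t + c₄) *
            ((1:ℝ) / (c₃ * ζ t + c₄)) * d2 w ((c₁ * ζ t + c₂) / (c₃ * ζ t + c₄),
              (y / ρ t - x + c₅ * ζ t) / (c₃ * ζ t + c₄))
          + c₃ * (y / ρ t - x) ^ 2 / (2 * (c₃ * ζ t + c₄))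
          - c₄ * c₅ * (y / ρ t - x) / (c₃ * ζ t + c₄)) := by
    intro t ht hA x y
    have hr := hρ0 t ht
    have hfun : (fun s => u (t, s, y)) = (fun s =>
        (c₁ * c₄ - c₂ * c₃) * (c₃ * ζ t + c₄) *
          w ((c₁ * ζ t + c₂) / (c₃ * ζ t + c₄), (y / ρ t - s + c₅ * ζ t) / (c₃ * ζ t + c₄))
        + c₃ * (y / ρ t - s) ^ 3 / (6 * (c₃ * ζ t + c₄))
        - c₄ * c₅ * (y / ρ t - s) ^ 2 / (2 * (c₃ * ζ t + c₄))
        - deriv ρ t / (6 * ρ t) * y ^ 3) := funext fun s => hu t s y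
    have hzx : HasDerivAt (fun s : ℝ => y / ρ t - s) (-1 : ℝ) x := by
      simpa using (hasDerivAt_id x).const_sub (y / ρ t)
    have hZ2x : HasDerivAt (fun s : ℝ => (y / ρ t - s + c₅ * ζ t) / (c₃ * ζ t + c₄))
        ((-1 : ℝ) / (c₃ * ζ t + c₄)) x := (hzx.add_const _).div_const _
    have hwc := hasDerivAt_comp2 hw
      (hasDerivAt_const x ((c₁ * ζ t + c₂) / (c₃ * ζ t + c₄))) hZ2x
    have hD := ((((hwc.const_mul ((c₁ * c₄ - c₂ * c₃) * (c₃ * ζ t + c₄))).add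
        (((hzx.pow 3).const_mul c₃).div_const (6 * (c₃ * ζ t + c₄)))).sub
        (((hzx.pow 2).const_mul (c₄ * c₅)).div_const (2 * (c₃ * ζ t + c₄)))).sub_const
        (deriv ρ t / (6 * ρ t) * y ^ 3))
    have hD' := hD.congr_of_eventuallyEq (Filter.EventuallyEq.of_eq hfun)
    have h0 : Dx u (t, x, y) = deriv (fun s => u (t, s, y)) x := rfl
    rw [h0, hD'.deriv]
    norm_num
    field_simp
    ring
  -- F2 : formula for Dx (Dy u)
  have F2 : ∀ t, t ∈ I → c₃ * ζ t + c₄ ≠ 0 → ∀ x y : ℝ,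
      Dx (Dy u) (t, x, y) =
        -(((c₁ * c₄ - c₂ * c₃) * d2 (d2 w) ((c₁ * ζ t + c₂) / (c₃ * ζ t + c₄),
            (y / ρ t - x + c₅ * ζ t) / (c₃ * ζ t + c₄))
          + c₃ * (y / ρ t - x) - c₄ * c₅) / ((c₃ * ζ t + c₄) * ρ t)) := by
    intro t ht hA x y
    have hr := hρ0 t ht
    have hfun : (fun s => Dy u (t, s, y)) = (fun s =>
        ((c₁ * c₄ - c₂ * c₃) * d2 w ((c₁ * ζ t + c₂) / (c₃ * ζ t + c₄),
            (y / ρ t - s + c₅ * ζ t) / (c₃ * ζ t + c₄))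
          + c₃ * (y / ρ t - s) ^ 2 / (2 * (c₃ * ζ t + c₄))
          - c₄ * c₅ * (y / ρ t - s) / (c₃ * ζ t + c₄)) / ρ t
        - deriv ρ t / (2 * ρ t) * y ^ 2) := funext fun s => F1 t ht hA s y
    have hzx : HasDerivAt (fun s : ℝ => y / ρ t - s) (-1 : ℝ) x := by
      simpa using (hasDerivAt_id x).const_sub (y / ρ t)
    have hZ2x : HasDerivAt (fun s : ℝ => (y / ρ t - s + c₅ * ζ t) / (c₃ * ζ t + c₄))
        ((-1 : ℝ) / (c₃ * ζ t + c₄)) x := (hzx.add_const _).div_const _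
    have hwc := hasDerivAt_comp2 hW2
      (hasDerivAt_const x ((c₁ * ζ t + c₂) / (c₃ * ζ t + c₄))) hZ2x
    have hD := ((((hwc.const_mul (c₁ * c₄ - c₂ * c₃)).add
        (((hzx.pow 2).const_mul c₃).div_const (2 * (c₃ * ζ t + c₄)))).sub
        ((hzx.const_mul (c₄ * c₅)).div_const (c₃ * ζ t + c₄))).div_const (ρ t)).sub_const
        (deriv ρ t / (2 * ρ t) * y ^ 2)
    have hD' := hD.congr_of_eventuallyEq (Filter.EventuallyEq.of_eq hfun)
    have h0 : Dx (Dy u) (t, x, y) = deriv (fun s => Dy u (t, s, y)) x := rfl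
    rw [h0, hD'.deriv]
    norm_num
    field_simp
    ring
  -- F3 : formula for Dx (Dx u)
  have F3 : ∀ t, t ∈ I → c₃ * ζ t + c₄ ≠ 0 → ∀ x y : ℝ,
      Dx (Dx u) (t, x, y) =
        ((c₁ * c₄ - c₂ * c₃) * d2 (d2 w) ((c₁ * ζ t + c₂) / (c₃ * ζ t + c₄),
            (y / ρ t - x + c₅ * ζ t) / (c₃ * ζ t + c₄))
          + c₃ * (y / ρ t - x) - c₄ * c₅) / (c₃ * ζ t + c₄) := by
    intro t ht hA x y
    have hr := hρ0 t ht
    have hfun : (fun s => Dx u (t, s, y)) = (fun s =>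
        -((c₁ * c₄ - c₂ * c₃) * (c₃ * ζ t + c₄) *
            ((1:ℝ) / (c₃ * ζ t + c₄)) * d2 w ((c₁ * ζ t + c₂) / (c₃ * ζ t + c₄),
              (y / ρ t - s + c₅ * ζ t) / (c₃ * ζ t + c₄))
          + c₃ * (y / ρ t - s) ^ 2 / (2 * (c₃ * ζ t + c₄))
          - c₄ * c₅ * (y / ρ t - s) / (c₃ * ζ t + c₄))) := funext fun s => F3x t ht hA s y
    have hzx : HasDerivAt (fun s : ℝ => y / ρ t - s) (-1 : ℝ) x := by
      simpa using (hasDerivAt_id x).const_sub (y / ρ t)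
    have hZ2x : HasDerivAt (fun s : ℝ => (y / ρ t - s + c₅ * ζ t) / (c₃ * ζ t + c₄))
        ((-1 : ℝ) / (c₃ * ζ t + c₄)) x := (hzx.add_const _).div_const _
    have hwc := hasDerivAt_comp2 hW2
      (hasDerivAt_const x ((c₁ * ζ t + c₂) / (c₃ * ζ t + c₄))) hZ2x
    have hD := (((hwc.const_mul ((c₁ * c₄ - c₂ * c₃) * (c₃ * ζ t + c₄) *
          ((1:ℝ) / (c₃ * ζ t + c₄)))).add
        (((hzx.pow 2).const_mul c₃).div_const (2 * (c₃ * ζ t + c₄)))).sub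
        ((hzx.const_mul (c₄ * c₅)).div_const (c₃ * ζ t + c₄))).neg
    have hD' := hD.congr_of_eventuallyEq (Filter.EventuallyEq.of_eq hfun)
    have h0 : Dx (Dx u) (t, x, y) = deriv (fun s => Dx u (t, s, y)) x := rfl
    rw [h0, hD'.deriv]
    norm_num
    field_simp
    ring
  -- F4 : formula for Dy (Dy u)
  have F4 : ∀ t, t ∈ I → c₃ * ζ t + c₄ ≠ 0 → ∀ x y : ℝ,
      Dy (Dy u) (t, x, y) =
        ((c₁ * c₄ - c₂ * c₃) * d2 (d2 w) ((c₁ * ζ t + c₂) / (c₃ * ζ t + c₄),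
            (y / ρ t - x + c₅ * ζ t) / (c₃ * ζ t + c₄))
          + c₃ * (y / ρ t - x) - c₄ * c₅) / ((c₃ * ζ t + c₄) * ρ t ^ 2)
        - deriv ρ t * y / ρ t := by
    intro t ht hA x y
    have hr := hρ0 t ht
    have hfun : (fun s => Dy u (t, x, s)) = (fun s =>
        ((c₁ * c₄ - c₂ * c₃) * d2 w ((c₁ * ζ t + c₂) / (c₃ * ζ t + c₄),
            (s / ρ t - x + c₅ * ζ t) / (c₃ * ζ t + c₄))
          + c₃ * (s / ρ t - x) ^ 2 / (2 * (c₃ * ζ t + c₄))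
          - c₄ * c₅ * (s / ρ t - x) / (c₃ * ζ t + c₄)) / ρ t
        - deriv ρ t / (2 * ρ t) * s ^ 2) := funext fun s => F1 t ht hA x s
    have hz : HasDerivAt (fun s : ℝ => s / ρ t - x) (1 / ρ t) y :=
      ((hasDerivAt_id y).div_const (ρ t)).sub_const x
    have hZ2 : HasDerivAt (fun s : ℝ => (s / ρ t - x + c₅ * ζ t) / (c₃ * ζ t + c₄))
        ((1 / ρ t) / (c₃ * ζ t + c₄)) y := (hz.add_const _).div_const _
    have hwc := hasDerivAt_comp2 hW2
      (hasDerivAt_const y ((c₁ * ζ t + c₂) / (c₃ * ζ t + c₄))) hZ2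
    have hD := ((((hwc.const_mul (c₁ * c₄ - c₂ * c₃)).add
        (((hz.pow 2).const_mul c₃).div_const (2 * (c₃ * ζ t + c₄)))).sub
        ((hz.const_mul (c₄ * c₅)).div_const (c₃ * ζ t + c₄))).div_const (ρ t)).sub
        ((hasDerivAt_pow 2 y).const_mul (deriv ρ t / (2 * ρ t)))
    have hD' := hD.congr_of_eventuallyEq (Filter.EventuallyEq.of_eq hfun)
    have h0 : Dy (Dy u) (t, x, y) = deriv (fun s => Dy u (t, x, s)) y := rfl
    rw [h0, hD'.deriv]
    norm_num
    field_simp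

  constructor
  · -- smoothness
    have hueq : u = fun p : ℝ × ℝ × ℝ =>
        (c₁ * c₄ - c₂ * c₃) * (c₃ * ζ p.1 + c₄) *
          w ((c₁ * ζ p.1 + c₂) / (c₃ * ζ p.1 + c₄),
            (p.2.2 / ρ p.1 - p.2.1 + c₅ * ζ p.1) / (c₃ * ζ p.1 + c₄))
        + c₃ * (p.2.2 / ρ p.1 - p.2.1) ^ 3 / (6 * (c₃ * ζ p.1 + c₄))
        - c₄ * c₅ * (p.2.2 / ρ p.1 - p.2.1) ^ 2 / (2 * (c₃ * ζ p.1 + c₄))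
        - deriv ρ p.1 / (6 * ρ p.1) * p.2.2 ^ 3 := by
      funext p
      obtain ⟨t, x, y⟩ := p
      exact hu t x y
    rw [hueq]
    set D : Set (ℝ × ℝ × ℝ) := {p : ℝ × ℝ × ℝ | p.1 ∈ I ∧ c₃ * ζ p.1 + c₄ ≠ 0} with hD
    have hmem : ∀ p ∈ D, p.1 ∈ I := fun p hp => hp.1
    have h1 : ContDiffOn ℝ (⊤:ℕ∞) (fun p : ℝ × ℝ × ℝ => ζ p.1) D :=
      hζ.comp contDiff_fst.contDiffOn hmem
    have hρ1 : ContDiffOn ℝ (⊤:ℕ∞) (fun p : ℝ × ℝ × ℝ => ρ p.1) D :=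
      hρ.comp contDiff_fst.contDiffOn hmem
    have h2 : ContDiffOn ℝ (⊤:ℕ∞) (fun p : ℝ × ℝ × ℝ => deriv ρ p.1) D :=
      (hρ.deriv_of_isOpen hIopen (by norm_num)).comp contDiff_fst.contDiffOn hmem
    have hx : ContDiffOn ℝ (⊤:ℕ∞) (fun p : ℝ × ℝ × ℝ => p.2.1) D :=
      (contDiff_fst.comp contDiff_snd).contDiffOn
    have hy : ContDiffOn ℝ (⊤:ℕ∞) (fun p : ℝ × ℝ × ℝ => p.2.2) D :=
      (contDiff_snd.comp contDiff_snd).contDiffOn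
    have hρne : ∀ p ∈ D, ρ p.1 ≠ 0 := fun p hp => hρ0 p.1 hp.1
    have hA0 : ∀ p ∈ D, c₃ * ζ p.1 + c₄ ≠ 0 := fun p hp => hp.2
    have hAc : ContDiffOn ℝ (⊤:ℕ∞) (fun p : ℝ × ℝ × ℝ => c₃ * ζ p.1 + c₄) D :=
      (contDiffOn_const.mul h1).add contDiffOn_const
    have hz2 : ContDiffOn ℝ (⊤:ℕ∞) (fun p : ℝ × ℝ × ℝ => p.2.2 / ρ p.1 - p.2.1) D :=
      (hy.div hρ1 hρne).sub hx
    have hZ1c : ContDiffOn ℝ (⊤:ℕ∞)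
        (fun p : ℝ × ℝ × ℝ => (c₁ * ζ p.1 + c₂) / (c₃ * ζ p.1 + c₄)) D :=
      ((contDiffOn_const.mul h1).add contDiffOn_const).div hAc hA0
    have hZ2c : ContDiffOn ℝ (⊤:ℕ∞)
        (fun p : ℝ × ℝ × ℝ => (p.2.2 / ρ p.1 - p.2.1 + c₅ * ζ p.1) / (c₃ * ζ p.1 + c₄)) D :=
      (hz2.add (contDiffOn_const.mul h1)).div hAc hA0
    have hwc : ContDiffOn ℝ (⊤:ℕ∞) (fun p : ℝ × ℝ × ℝ =>
        w ((c₁ * ζ p.1 + c₂) / (c₃ * ζ p.1 + c₄),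
          (p.2.2 / ρ p.1 - p.2.1 + c₅ * ζ p.1) / (c₃ * ζ p.1 + c₄))) D :=
      hw.comp_contDiffOn (hZ1c.prodMk hZ2c)
    have t1 := ((contDiffOn_const (c := c₁ * c₄ - c₂ * c₃)).mul hAc).mul hwc
    have t2 := ((contDiffOn_const (c := c₃)).mul (hz2.pow 3)).div
      ((contDiffOn_const (c := (6:ℝ))).mul hAc)
      (fun p hp => mul_ne_zero (by norm_num) hp.2)
    have t3 := ((contDiffOn_const (c := c₄ * c₅)).mul (hz2.pow 2)).div
      ((contDiffOn_const (c := (2:ℝ))).mul hAc)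
      (fun p hp => mul_ne_zero (by norm_num) hp.2)
    have t4 := (h2.div ((contDiffOn_const (c := (6:ℝ))).mul hρ1)
      (fun p hp => mul_ne_zero (by norm_num) (hρ0 p.1 hp.1))).mul (hy.pow 3)
    exact ((t1.add t2).sub t3).sub t4
  · rintro ⟨t, x, y⟩ ⟨ht, hA⟩
    have hr := hρ0 t ht
    have hr3 : ρ t ^ 3 ≠ 0 := pow_ne_zero _ hr
    have hρd : HasDerivAt ρ (deriv ρ t) t :=
      ((hρ.contDiffAt (hIopen.mem_nhds ht)).differentiableAt (by norm_num)).hasDerivAt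
    have hζd : HasDerivAt ζ (2 * (ρ t ^ 3 - 1) / ρ t ^ 3) t := by
      have h := ((hζ.contDiffAt (hIopen.mem_nhds ht)).differentiableAt (by norm_num)).hasDerivAt
      rwa [hζ' t ht] at h
    have hopen : IsOpen {s : ℝ | s ∈ I ∧ c₃ * ζ s + c₄ ≠ 0} := by
      have hc : ContinuousOn (fun s => c₃ * ζ s + c₄) I :=
        (continuousOn_const.mul hζ.continuousOn).add continuousOn_const
      have h2 := hc.isOpen_inter_preimage hIopen (isOpen_compl_singleton (x := (0:ℝ)))
      convert h2 using 1
      rfl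
    -- LHS
    have hAd : HasDerivAt (fun s => c₃ * ζ s + c₄) (c₃ * (2 * (ρ t ^ 3 - 1) / ρ t ^ 3)) t :=
      (hζd.const_mul c₃).add_const c₄
    have hQ1 : HasDerivAt (fun s => (c₁ * ζ s + c₂) / (c₃ * ζ s + c₄)) _ t :=
      ((hζd.const_mul c₁).add_const c₂).div hAd hA
    have hyt : HasDerivAt (fun s => y / ρ s - x) _ t :=
      ((hasDerivAt_const t y).div hρd hr).sub_const x
    have hQ2 : HasDerivAt (fun s => (y / ρ s - x + c₅ * ζ s) / (c₃ * ζ s + c₄)) _ t :=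
      (hyt.add (hζd.const_mul c₅)).div hAd hA
    have hwct := hasDerivAt_comp2 hW22 hQ1 hQ2
    have hN : HasDerivAt (fun s => (c₁ * c₄ - c₂ * c₃) *
        d2 (d2 w) ((c₁ * ζ s + c₂) / (c₃ * ζ s + c₄),
          (y / ρ s - x + c₅ * ζ s) / (c₃ * ζ s + c₄))
        + c₃ * (y / ρ s - x) - c₄ * c₅) _ t :=
      ((hwct.const_mul (c₁ * c₄ - c₂ * c₃)).add (hyt.const_mul c₃)).sub_const (c₄ * c₅)
    have hden : HasDerivAt (fun s => (c₃ * ζ s + c₄) * ρ s) _ t := hAd.mul hρd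
    have hDt : HasDerivAt (fun s =>
        -(((c₁ * c₄ - c₂ * c₃) * d2 (d2 w) ((c₁ * ζ s + c₂) / (c₃ * ζ s + c₄),
            (y / ρ s - x + c₅ * ζ s) / (c₃ * ζ s + c₄))
          + c₃ * (y / ρ s - x) - c₄ * c₅) / ((c₃ * ζ s + c₄) * ρ s))) _ t :=
      (hN.div hden (mul_ne_zero hA hr)).neg
    have hEq : (fun s => Dx (Dy u) (s, x, y)) =ᶠ[nhds t] (fun s =>
        -(((c₁ * c₄ - c₂ * c₃) * d2 (d2 w) ((c₁ * ζ s + c₂) / (c₃ * ζ s + c₄),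
            (y / ρ s - x + c₅ * ζ s) / (c₃ * ζ s + c₄))
          + c₃ * (y / ρ s - x) - c₄ * c₅) / ((c₃ * ζ s + c₄) * ρ s))) :=
      Filter.eventuallyEq_of_mem (hopen.mem_nhds ⟨ht, hA⟩) (fun s hs => F2 s hs.1 hs.2 x y)
    have h0t : Dt (Dx (Dy u)) (t, x, y) = deriv (fun s => Dx (Dy u) (s, x, y)) t := rfl
    -- RHS first term
    have hzx : HasDerivAt (fun s : ℝ => y / ρ t - s) (-1 : ℝ) x := by
      simpa using (hasDerivAt_id x).const_sub (y / ρ t)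
    have hZ2x : HasDerivAt (fun s : ℝ => (y / ρ t - s + c₅ * ζ t) / (c₃ * ζ t + c₄))
        ((-1 : ℝ) / (c₃ * ζ t + c₄)) x := (hzx.add_const _).div_const _
    have hwcx := hasDerivAt_comp2 hW22
      (hasDerivAt_const x ((c₁ * ζ t + c₂) / (c₃ * ζ t + c₄))) hZ2x
    have hNx : HasDerivAt (fun s => (c₁ * c₄ - c₂ * c₃) *
        d2 (d2 w) ((c₁ * ζ t + c₂) / (c₃ * ζ t + c₄),
          (y / ρ t - s + c₅ * ζ t) / (c₃ * ζ t + c₄))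
        + c₃ * (y / ρ t - s) - c₄ * c₅) _ x :=
      ((hwcx.const_mul (c₁ * c₄ - c₂ * c₃)).add (hzx.const_mul c₃)).sub_const (c₄ * c₅)
    have hDx1 : HasDerivAt (fun s =>
        ((c₁ * c₄ - c₂ * c₃) * d2 (d2 w) ((c₁ * ζ t + c₂) / (c₃ * ζ t + c₄),
            (y / ρ t - s + c₅ * ζ t) / (c₃ * ζ t + c₄))
          + c₃ * (y / ρ t - s) - c₄ * c₅) / (c₃ * ζ t + c₄) *
        -(((c₁ * c₄ - c₂ * c₃) * d2 (d2 w) ((c₁ * ζ t + c₂) / (c₃ * ζ t + c₄),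
            (y / ρ t - s + c₅ * ζ t) / (c₃ * ζ t + c₄))
          + c₃ * (y / ρ t - s) - c₄ * c₅) / ((c₃ * ζ t + c₄) * ρ t))) _ x :=
      (hNx.div_const (c₃ * ζ t + c₄)).mul ((hNx.div_const ((c₃ * ζ t + c₄) * ρ t)).neg)
    have hfunx : (fun s => Dx (Dx u) (t, s, y) * Dx (Dy u) (t, s, y)) = (fun s =>
        ((c₁ * c₄ - c₂ * c₃) * d2 (d2 w) ((c₁ * ζ t + c₂) / (c₃ * ζ t + c₄),
            (y / ρ t - s + c₅ * ζ t) / (c₃ * ζ t + c₄))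
          + c₃ * (y / ρ t - s) - c₄ * c₅) / (c₃ * ζ t + c₄) *
        -(((c₁ * c₄ - c₂ * c₃) * d2 (d2 w) ((c₁ * ζ t + c₂) / (c₃ * ζ t + c₄),
            (y / ρ t - s + c₅ * ζ t) / (c₃ * ζ t + c₄))
          + c₃ * (y / ρ t - s) - c₄ * c₅) / ((c₃ * ζ t + c₄) * ρ t))) :=
      funext fun s => by rw [F3 t ht hA s y, F2 t ht hA s y]
    have h0x : Dx (fun q => Dx (Dx u) q * Dx (Dy u) q) (t, x, y) =
        deriv (fun s => Dx (Dx u) (t, s, y) * Dx (Dy u) (t, s, y)) x := rfl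
    -- RHS second term
    have hz : HasDerivAt (fun s : ℝ => s / ρ t - x) (1 / ρ t) y :=
      ((hasDerivAt_id y).div_const (ρ t)).sub_const x
    have hZ2 : HasDerivAt (fun s : ℝ => (s / ρ t - x + c₅ * ζ t) / (c₃ * ζ t + c₄))
        ((1 / ρ t) / (c₃ * ζ t + c₄)) y := (hz.add_const _).div_const _
    have hwcy := hasDerivAt_comp2 hW22
      (hasDerivAt_const y ((c₁ * ζ t + c₂) / (c₃ * ζ t + c₄))) hZ2
    have hNy : HasDerivAt (fun s => (c₁ * c₄ - c₂ * c₃) *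
        d2 (d2 w) ((c₁ * ζ t + c₂) / (c₃ * ζ t + c₄),
          (s / ρ t - x + c₅ * ζ t) / (c₃ * ζ t + c₄))
        + c₃ * (s / ρ t - x) - c₄ * c₅) _ y :=
      ((hwcy.const_mul (c₁ * c₄ - c₂ * c₃)).add (hz.const_mul c₃)).sub_const (c₄ * c₅)
    have hlin : HasDerivAt (fun s : ℝ => deriv ρ t * s / ρ t) _ y :=
      ((hasDerivAt_id y).const_mul (deriv ρ t)).div_const (ρ t)
    have hDy1 : HasDerivAt (fun s =>
        -(((c₁ * c₄ - c₂ * c₃) * d2 (d2 w) ((c₁ * ζ t + c₂) / (c₃ * ζ t + c₄),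
            (s / ρ t - x + c₅ * ζ t) / (c₃ * ζ t + c₄))
          + c₃ * (s / ρ t - x) - c₄ * c₅) / ((c₃ * ζ t + c₄) * ρ t)) *
        (((c₁ * c₄ - c₂ * c₃) * d2 (d2 w) ((c₁ * ζ t + c₂) / (c₃ * ζ t + c₄),
            (s / ρ t - x + c₅ * ζ t) / (c₃ * ζ t + c₄))
          + c₃ * (s / ρ t - x) - c₄ * c₅) / ((c₃ * ζ t + c₄) * ρ t ^ 2)
          - deriv ρ t * s / ρ t)) _ y :=
      ((hNy.div_const ((c₃ * ζ t + c₄) * ρ t)).neg).mul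
        ((hNy.div_const ((c₃ * ζ t + c₄) * ρ t ^ 2)).sub hlin)
    have hfuny : (fun s => Dx (Dy u) (t, x, s) * Dy (Dy u) (t, x, s)) = (fun s =>
        -(((c₁ * c₄ - c₂ * c₃) * d2 (d2 w) ((c₁ * ζ t + c₂) / (c₃ * ζ t + c₄),
            (s / ρ t - x + c₅ * ζ t) / (c₃ * ζ t + c₄))
          + c₃ * (s / ρ t - x) - c₄ * c₅) / ((c₃ * ζ t + c₄) * ρ t)) *
        (((c₁ * c₄ - c₂ * c₃) * d2 (d2 w) ((c₁ * ζ t + c₂) / (c₃ * ζ t + c₄),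
            (s / ρ t - x + c₅ * ζ t) / (c₃ * ζ t + c₄))
          + c₃ * (s / ρ t - x) - c₄ * c₅) / ((c₃ * ζ t + c₄) * ρ t ^ 2)
          - deriv ρ t * s / ρ t)) :=
      funext fun s => by rw [F2 t ht hA x s, F4 t ht hA x s]
    have h0y : Dy (fun q => Dx (Dy u) q * Dy (Dy u) q) (t, x, y) =
        deriv (fun s => Dx (Dy u) (t, x, s) * Dy (Dy u) (t, x, s)) y := rfl
    -- conclude
    have key := hweq ((c₁ * ζ t + c₂) / (c₃ * ζ t + c₄),
      (y / ρ t - x + c₅ * ζ t) / (c₃ * ζ t + c₄))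
    have h122 : d1 (d2 (d2 w)) ((c₁ * ζ t + c₂) / (c₃ * ζ t + c₄),
        (y / ρ t - x + c₅ * ζ t) / (c₃ * ζ t + c₄)) =
        -(d2 (d2 w) ((c₁ * ζ t + c₂) / (c₃ * ζ t + c₄),
            (y / ρ t - x + c₅ * ζ t) / (c₃ * ζ t + c₄)) *
          d2 (d2 (d2 w)) ((c₁ * ζ t + c₂) / (c₃ * ζ t + c₄),
            (y / ρ t - x + c₅ * ζ t) / (c₃ * ζ t + c₄))) := by linarith
    show Dt (Dx (Dy u)) (t, x, y) = _
    rw [h0t, hEq.deriv_eq, hDt.deriv, h0x, hfunx, hDx1.deriv, h0y, hfuny, hDy1.deriv]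
    rw [h122]
    norm_num
    field_simp
    ring
end
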